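/- Let μ be a finite positive Borel measure on the unit circle T with infinite support, K_n its Christoffel kernel, w ∈ T, and ζ_{0n}, …, ζ_{nn} ∈ T the zeros of B_{n+1}(w,·). For every polynomial p of degree at most n and every j ∈ {0, …, n}, ∫_T p(z) conj(K_n(ζ_{jn}, z)) / sqrt(K_n(ζ_{jn}, ζ_{jn})) dμ(z) = p(ζ_{jn}) / sqrt(K_n(ζ_{jn}, ζ_{jn})); consequently, for polynomials p, q of degree at most n, ∫_T p conj(q) dμ = Σ_{j=0}^n p(ζ_{jn}) conj(q(ζ_{jn})) / K_n(ζ_{jn}, ζ_{jn}). -/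

import Mathlib

open MeasureTheory Polynomial Filter
open scoped ComplexConjugate Topology

/-- The Christoffel kernel `K_n(w,z) = ∑_{j=0}^n conj(φ_j(w)) φ_j(z)`. -/
noncomputable def christoffelK (φ : ℕ → Polynomial ℂ) (n : ℕ) (w z : ℂ) : ℂ :=
  ∑ j ∈ Finset.range (n + 1), conj ((φ j).eval w) * (φ j).eval z

/-- The para-orthogonal polynomial `B_{n+1}(w,z) = (1 − conj(w) z) K_n(w,z)`. -/
noncomputable def paraOrtho (φ : ℕ → Polynomial ℂ) (n : ℕ) (w z : ℂ) : ℂ :=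
  (1 - conj w * z) * christoffelK φ n w z

/-- **Reproducing property at the nodes and Szegő quadrature for `Π_n`.**
For every polynomial `p` of degree at most `n` and every `j`,
`∫_T p(z) conj(K_n(ζ_{jn}, z)) / sqrt(K_n(ζ_{jn},ζ_{jn})) dμ(z)
  = p(ζ_{jn}) / sqrt(K_n(ζ_{jn},ζ_{jn}))`;
consequently, for polynomials `p, q` of degree at most `n`,
`∫_T p conj(q) dμ = ∑_{j=0}^n p(ζ_{jn}) conj(q(ζ_{jn})) / K_n(ζ_{jn},ζ_{jn})`. -/
lemma ae_sphere (μ : Measure ℂ) (hμT : μ (Metric.sphere (0 : ℂ) 1)ᶜ = 0) :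
    ∀ᵐ z ∂μ, z ∈ Metric.sphere (0 : ℂ) 1 := by
  rw [ae_iff]
  exact hμT

lemma integrable_mul_conj (μ : Measure ℂ) [IsFiniteMeasure μ]
    (hμT : μ (Metric.sphere (0 : ℂ) 1)ᶜ = 0) (p q : Polynomial ℂ) :
    Integrable (fun z => p.eval z * conj (q.eval z)) μ := by
  have hcont : Continuous (fun z : ℂ => p.eval z * conj (q.eval z)) := by
    continuity
  obtain ⟨C, hC⟩ := (isCompact_sphere (0:ℂ) 1).exists_bound_of_continuousOn
      hcont.continuousOn
  refine Integrable.mono' (integrable_const C) hcont.aestronglyMeasurable ?_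
  filter_upwards [ae_sphere μ hμT] with z hz using hC z hz

lemma exists_sum_repr (φ : ℕ → Polynomial ℂ)
    (hdeg : ∀ k, (φ k).degree = (k : ℕ))
    (hlead : ∀ k, 0 < ((φ k).leadingCoeff).re ∧ ((φ k).leadingCoeff).im = 0) :
    ∀ N : ℕ, ∀ p : Polynomial ℂ, p.degree ≤ N →
      ∃ c : ℕ → ℂ, p = ∑ k ∈ Finset.range (N + 1), Polynomial.C (c k) * φ k := by
  have hL : ∀ k, (φ k).leadingCoeff ≠ 0 := fun k => by
    intro h
    have := (hlead k).1
    rw [h] at this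
    simp at this
  intro N
  induction N with
  | zero =>
    intro p hp
    set b := (φ 0).coeff 0 with hb
    have h0 : φ 0 = Polynomial.C b :=
      Polynomial.eq_C_of_degree_le_zero (le_of_eq (by simpa using hdeg 0))
    have hc0 : b ≠ 0 := by
      have hnd0 : (φ 0).natDegree = 0 :=
        Polynomial.natDegree_eq_of_degree_eq_some (by simpa using hdeg 0)
      have : (φ 0).leadingCoeff = b := by rw [Polynomial.leadingCoeff, hnd0]
      rw [← this]; exact hL 0
    refine ⟨fun _ => p.coeff 0 / b, ?_⟩
    conv_lhs => rw [Polynomial.eq_C_of_degree_le_zero hp]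
    simp only [Finset.sum_range_succ, Finset.sum_range_zero, zero_add]
    rw [h0, ← Polynomial.C_mul, div_mul_cancel₀ _ hc0]
  | succ N ih =>
    intro p hp
    set L := (φ (N + 1)).leadingCoeff with hLdef
    set a := p.coeff (N + 1)
    set q := p - Polynomial.C (a / L) * φ (N + 1) with hq
    have hnd : (φ (N + 1)).natDegree = N + 1 :=
      Polynomial.natDegree_eq_of_degree_eq_some (hdeg (N + 1))
    have hqdeg : q.degree ≤ N := by
      rw [Polynomial.degree_le_iff_coeff_zero]
      intro m hm
      have hm' : (N : WithBot ℕ) < m := hm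
      have hmN : N < m := by exact_mod_cast hm'
      rcases eq_or_lt_of_le (Nat.succ_le_of_lt hmN) with h | h
      · -- m = N + 1
        have hco : (φ (N+1)).coeff (N+1) = L := by
          rw [hLdef]; unfold Polynomial.leadingCoeff; rw [hnd]
        simp only [hq, Polynomial.coeff_sub, Polynomial.coeff_C_mul, ← h, hco,
          div_mul_cancel₀ _ (hL (N+1)), sub_self]
        rw [sub_eq_zero]; exact (div_mul_cancel₀ _ (hL (N+1))).symm
      · -- m > N + 1
        have h1 : p.coeff m = 0 := Polynomial.coeff_eq_zero_of_degree_lt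
          (lt_of_le_of_lt hp (by exact_mod_cast h))
        have h2 : (φ (N+1)).coeff m = 0 := Polynomial.coeff_eq_zero_of_degree_lt
          (by rw [hdeg (N+1)]; exact_mod_cast h)
        simp [hq, h1, h2]
    obtain ⟨c, hc⟩ := ih q hqdeg
    refine ⟨fun k => if k = N + 1 then a / L else c k, ?_⟩
    rw [Finset.sum_range_succ]
    have : ∀ k ∈ Finset.range (N + 1),
        Polynomial.C (if k = N + 1 then a / L else c k) * φ k = Polynomial.C (c k) * φ k := by
      intro k hk
      rw [if_neg (by simp only [Finset.mem_range] at hk; omega)]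
    rw [Finset.sum_congr rfl this, ← hc]
    have hbeta : (fun k => if k = N + 1 then a / L else c k) (N + 1) = a / L := by simp
    rw [hbeta, hq]
    ring

noncomputable def Kpoly (φ : ℕ → Polynomial ℂ) (n : ℕ) (u : ℂ) : Polynomial ℂ :=
  ∑ m ∈ Finset.range (n + 1), Polynomial.C (conj ((φ m).eval u)) * φ m

lemma Kpoly_eval (φ : ℕ → Polynomial ℂ) (n : ℕ) (u z : ℂ) :
    (Kpoly φ n u).eval z = christoffelK φ n u z := by
  simp [Kpoly, christoffelK, Polynomial.eval_finset_sum]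

lemma Kpoly_degree (φ : ℕ → Polynomial ℂ) (hdeg : ∀ k, (φ k).degree = (k : ℕ))
    (n : ℕ) (u : ℂ) : (Kpoly φ n u).degree ≤ n := by
  refine (Polynomial.degree_sum_le _ _).trans ?_
  apply Finset.sup_le
  intro m hm
  refine (Polynomial.degree_mul_le _ _).trans ?_
  have h1 : (Polynomial.C (conj ((φ m).eval u))).degree ≤ 0 := Polynomial.degree_C_le
  have h2 : (φ m).degree ≤ (n : WithBot ℕ) := by
    rw [hdeg m]
    exact_mod_cast Nat.le_of_lt_succ (Finset.mem_range.mp hm)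
  calc (Polynomial.C (conj ((φ m).eval u))).degree + (φ m).degree
      ≤ 0 + (n : WithBot ℕ) := add_le_add h1 h2
    _ = (n : WithBot ℕ) := by rw [zero_add]

/-- Reproducing property of the Christoffel kernel. -/
lemma repro (μ : Measure ℂ) [IsFiniteMeasure μ]
    (hμT : μ (Metric.sphere (0 : ℂ) 1)ᶜ = 0)
    (φ : ℕ → Polynomial ℂ)
    (hdeg : ∀ k, (φ k).degree = (k : ℕ))
    (hlead : ∀ k, 0 < ((φ k).leadingCoeff).re ∧ ((φ k).leadingCoeff).im = 0)
    (horth : ∀ k m, ∫ z, (φ k).eval z * conj ((φ m).eval z) ∂μ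
        = if k = m then 1 else 0)
    (n : ℕ) (p : Polynomial ℂ) (hp : p.degree ≤ n) (u : ℂ) :
    ∫ z, p.eval z * conj (christoffelK φ n u z) ∂μ = p.eval u := by
  obtain ⟨c, hc⟩ := exists_sum_repr φ hdeg hlead n p hp
  -- expand conj K as a finite sum
  have hker : ∀ z, p.eval z * conj (christoffelK φ n u z)
      = ∑ m ∈ Finset.range (n + 1),
          (φ m).eval u * (p.eval z * conj ((φ m).eval z)) := by
    intro z
    rw [christoffelK, map_sum, Finset.mul_sum]
    congr 1
    ext m
    simp only [map_mul, RingHom.id_apply, Complex.conj_conj]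
    ring
  have hint1 : ∀ m : ℕ, Integrable
      (fun z => (φ m).eval u * (p.eval z * conj ((φ m).eval z))) μ :=
    fun m => (integrable_mul_conj μ hμT p (φ m)).const_mul _
  calc ∫ z, p.eval z * conj (christoffelK φ n u z) ∂μ
      = ∫ z, ∑ m ∈ Finset.range (n + 1),
          (φ m).eval u * (p.eval z * conj ((φ m).eval z)) ∂μ := by
        simp_rw [hker]
    _ = ∑ m ∈ Finset.range (n + 1),
          ∫ z, (φ m).eval u * (p.eval z * conj ((φ m).eval z)) ∂μ :=
        integral_finset_sum _ (fun m _ => hint1 m)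
    _ = ∑ m ∈ Finset.range (n + 1),
          (φ m).eval u * ∫ z, p.eval z * conj ((φ m).eval z) ∂μ := by
        simp_rw [integral_const_mul]
    _ = ∑ m ∈ Finset.range (n + 1), (φ m).eval u * c m := by
        refine Finset.sum_congr rfl fun m hm => ?_
        congr 1
        -- ∫ p conj φ_m = c m
        have hpe : ∀ z, p.eval z * conj ((φ m).eval z)
            = ∑ k ∈ Finset.range (n + 1), c k * ((φ k).eval z * conj ((φ m).eval z)) := by
          intro z
          conv_lhs => rw [hc]
          rw [Polynomial.eval_finset_sum, Finset.sum_mul]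
          refine Finset.sum_congr rfl fun k _ => ?_
          simp only [Polynomial.eval_mul, Polynomial.eval_C]
          ring
        calc ∫ z, p.eval z * conj ((φ m).eval z) ∂μ
            = ∑ k ∈ Finset.range (n + 1),
                ∫ z, c k * ((φ k).eval z * conj ((φ m).eval z)) ∂μ := by
              simp_rw [hpe]
              exact integral_finset_sum _
                (fun k _ => ((integrable_mul_conj μ hμT (φ k) (φ m)).const_mul _))
          _ = ∑ k ∈ Finset.range (n + 1), c k * if k = m then 1 else 0 := by
              simp_rw [integral_const_mul, horth]
          _ = c m := by
              simp only [mul_ite, mul_one, mul_zero]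
              rw [Finset.sum_ite_eq' (Finset.range (n + 1))]
              simp only [hm, if_pos]
    _ = p.eval u := by
        conv_rhs => rw [hc]
        rw [Polynomial.eval_finset_sum]
        refine Finset.sum_congr rfl fun k _ => ?_
        simp only [Polynomial.eval_mul, Polynomial.eval_C]
        ring

lemma integral_self_ne_zero (μ : Measure ℂ) [IsFiniteMeasure μ]
    (hμT : μ (Metric.sphere (0 : ℂ) 1)ᶜ = 0)
    (hμinf : ∀ s : Finset ℂ, μ ((s : Set ℂ)ᶜ) ≠ 0)
    (p : Polynomial ℂ) (hp : p ≠ 0) :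
    ∫ z, p.eval z * conj (p.eval z) ∂μ ≠ 0 := by
  classical
  have hre : ∀ z : ℂ, p.eval z * conj (p.eval z) = ((Complex.normSq (p.eval z) : ℝ) : ℂ) :=
    fun z => Complex.mul_conj _
  have hint : Integrable (fun z => Complex.normSq (p.eval z)) μ := by
    have h := (integrable_mul_conj μ hμT p p).re
    refine h.congr (Eventually.of_forall fun z => ?_)
    simp only [hre]
    simp
  intro h0
  have h0' : ∫ z, Complex.normSq (p.eval z) ∂μ = 0 := by
    have hre2 := integral_re (𝕜 := ℂ) (integrable_mul_conj μ hμT p p)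
    rw [h0] at hre2
    simp only [map_zero] at hre2
    rw [← hre2]
    refine integral_congr_ae (Eventually.of_forall fun z => ?_)
    simp only [hre]
    simp
  have hae : ∀ᵐ z ∂μ, Complex.normSq (p.eval z) = 0 :=
    (integral_eq_zero_iff_of_nonneg (fun z => Complex.normSq_nonneg _) hint).mp h0'
  have hae' : ∀ᵐ z ∂μ, p.eval z = 0 := by
    filter_upwards [hae] with z hz using Complex.normSq_eq_zero.mp hz
  have hnull : μ ((p.roots.toFinset : Set ℂ)ᶜ) = 0 := by
    refine measure_mono_null ?_ (ae_iff.mp hae')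
    intro z hz
    simp only [Set.mem_compl_iff, Finset.mem_coe, Multiset.mem_toFinset] at hz
    simp only [Set.mem_setOf_eq]
    intro hzero
    exact hz (Polynomial.mem_roots'.mpr ⟨hp, hzero⟩)
  exact hμinf _ hnull

lemma Kdiag (φ : ℕ → Polynomial ℂ)
    (hdeg : ∀ k, (φ k).degree = (k : ℕ))
    (hlead : ∀ k, 0 < ((φ k).leadingCoeff).re ∧ ((φ k).leadingCoeff).im = 0)
    (n : ℕ) (u : ℂ) :
    0 < (christoffelK φ n u u).re ∧ (christoffelK φ n u u).im = 0 := by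
  have hform : christoffelK φ n u u
      = ((∑ j ∈ Finset.range (n + 1), Complex.normSq ((φ j).eval u) : ℝ) : ℂ) := by
    rw [christoffelK]
    push_cast
    refine Finset.sum_congr rfl fun j _ => ?_
    rw [mul_comm, Complex.mul_conj]
  constructor
  · rw [hform]
    simp only [Complex.ofReal_re]
    have h0 : 0 < Complex.normSq ((φ 0).eval u) := by
      have hnd0 : (φ 0).natDegree = 0 :=
        Polynomial.natDegree_eq_of_degree_eq_some (by simpa using hdeg 0)
      have h0' : φ 0 = Polynomial.C ((φ 0).coeff 0) :=
        Polynomial.eq_C_of_degree_le_zero (le_of_eq (by simpa using hdeg 0))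
      have hb : (φ 0).coeff 0 ≠ 0 := by
        have hlc : (φ 0).leadingCoeff = (φ 0).coeff 0 := by rw [Polynomial.leadingCoeff, hnd0]
        intro h
        have h2 := (hlead 0).1
        rw [hlc, h] at h2
        simp at h2
      rw [h0']
      simpa [Complex.normSq_pos] using hb
    refine lt_of_lt_of_le h0 ?_
    exact Finset.single_le_sum (f := fun j => Complex.normSq ((φ j).eval u))
      (fun j _ => Complex.normSq_nonneg _) (Finset.mem_range.mpr (Nat.succ_pos n))
  · rw [hform]; simp

lemma unit_mul_conj {z : ℂ} (hz : z ∈ Metric.sphere (0:ℂ) 1) : z * conj z = 1 := by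
  have h : ‖z‖ = 1 := by rwa [mem_sphere_zero_iff_norm] at hz
  rw [Complex.mul_conj]
  norm_cast
  rw [Complex.normSq_eq_norm_sq, h, one_pow]

lemma K_hermit (φ : ℕ → Polynomial ℂ) (n : ℕ) (a b : ℂ) :
    conj (christoffelK φ n a b) = christoffelK φ n b a := by
  simp only [christoffelK, map_sum, map_mul, Complex.conj_conj]
  exact Finset.sum_congr rfl fun j _ => mul_comm _ _

lemma bFactorization (φ : ℕ → Polynomial ℂ)
    (hdeg : ∀ k, (φ k).degree = (k : ℕ))
    (hlead : ∀ k, 0 < ((φ k).leadingCoeff).re ∧ ((φ k).leadingCoeff).im = 0)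
    (n : ℕ) (w : ℂ) (ζ : Fin (n + 1) → ℂ)
    (hζinj : Function.Injective ζ)
    (hζ0 : ∀ j, paraOrtho φ n w (ζ j) = 0) :
    ∃ c : ℂ, c ≠ 0 ∧ (1 - Polynomial.C (conj w) * Polynomial.X) * Kpoly φ n w
      = Polynomial.C c * ∏ j : Fin (n + 1), (Polynomial.X - Polynomial.C (ζ j)) := by
  classical
  set B : Polynomial ℂ := (1 - Polynomial.C (conj w) * Polynomial.X) * Kpoly φ n w with hBdef
  have hBeval : ∀ z, B.eval z = paraOrtho φ n w z := by
    intro z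
    simp [hBdef, paraOrtho, Kpoly_eval]
  have hfac1ne : (1 - Polynomial.C (conj w) * Polynomial.X) ≠ 0 := by
    intro h
    have := congrArg (fun q => Polynomial.coeff q 0) h
    simp at this
  have hKne : Kpoly φ n w ≠ 0 := by
    intro h
    have h2 : christoffelK φ n w w = 0 := by rw [← Kpoly_eval, h]; simp
    have := (Kdiag φ hdeg hlead n w).1
    rw [h2] at this
    simp at this
  have hBne : B ≠ 0 := mul_ne_zero hfac1ne hKne
  have hBdeg : B.degree ≤ (n + 1 : ℕ) := by
    refine (Polynomial.degree_mul_le _ _).trans ?_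
    have h1 : (1 - Polynomial.C (conj w) * Polynomial.X).degree ≤ 1 := by
      refine (Polynomial.degree_sub_le _ _).trans ?_
      simp only [Polynomial.degree_one]
      refine max_le (by norm_num) ?_
      refine (Polynomial.degree_mul_le _ _).trans ?_
      calc (Polynomial.C (conj w)).degree + Polynomial.X.degree
          ≤ 0 + 1 := add_le_add Polynomial.degree_C_le (le_of_eq (Polynomial.degree_X))
        _ = 1 := by norm_num
    calc (1 - Polynomial.C (conj w) * Polynomial.X).degree + (Kpoly φ n w).degree
        ≤ 1 + (n : WithBot ℕ) := add_le_add h1 (Kpoly_degree φ hdeg n w)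
      _ = ((n + 1 : ℕ) : WithBot ℕ) := by
          push_cast
          rw [add_comm]
  -- the multiset of nodes is contained in the roots of B
  have hnodup : (Multiset.map ζ Finset.univ.val).Nodup :=
    Finset.univ.nodup.map hζinj
  have hle : Multiset.map ζ Finset.univ.val ≤ B.roots := by
    rw [Multiset.le_iff_count]
    intro a
    by_cases ha : a ∈ Multiset.map ζ Finset.univ.val
    · have h1 : (Multiset.map ζ Finset.univ.val).count a = 1 :=
        Multiset.count_eq_one_of_mem hnodup ha
      rw [h1]
      obtain ⟨j, _, rfl⟩ := Multiset.mem_map.mp ha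
      have hroot : (ζ j) ∈ B.roots := by
        rw [Polynomial.mem_roots']
        exact ⟨hBne, by rw [Polynomial.IsRoot, hBeval]; exact hζ0 j⟩
      exact Multiset.one_le_count_iff_mem.mpr hroot
    · rw [Multiset.count_eq_zero_of_notMem ha]
      exact Nat.zero_le _
  have hdvd : (∏ j : Fin (n + 1), (Polynomial.X - Polynomial.C (ζ j))) ∣ B := by
    have := (Multiset.prod_X_sub_C_dvd_iff_le_roots hBne
      (Multiset.map ζ Finset.univ.val)).mpr hle
    rwa [Multiset.map_map, ← Finset.prod_eq_multiset_prod] at this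
  obtain ⟨g, hg⟩ := hdvd
  set P : Polynomial ℂ := ∏ j : Fin (n + 1), (Polynomial.X - Polynomial.C (ζ j)) with hPdef
  have hPmonic : P.Monic := Polynomial.monic_prod_of_monic _ _
    (fun j _ => Polynomial.monic_X_sub_C (ζ j))
  have hPdeg : P.natDegree = n + 1 := by
    rw [hPdef, Polynomial.natDegree_prod _ _ (fun j _ => Polynomial.X_sub_C_ne_zero (ζ j))]
    simp [Polynomial.natDegree_X_sub_C]
  have hgne : g ≠ 0 := by
    intro h
    rw [h, mul_zero] at hg
    exact hBne hg
  have hgdeg : g.natDegree = 0 := by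
    have hnd : B.natDegree = P.natDegree + g.natDegree := by
      rw [hg, Polynomial.natDegree_mul (hPmonic.ne_zero) hgne]
    have hBnd : B.natDegree ≤ n + 1 := Polynomial.natDegree_le_iff_degree_le.mpr hBdeg
    omega
  obtain ⟨c, hc⟩ := Polynomial.natDegree_eq_zero.mp hgdeg
  refine ⟨c, ?_, ?_⟩
  · intro h
    rw [h] at hc
    rw [← hc] at hgne
    simp at hgne
  · rw [hg, ← hc, mul_comm]

lemma lemA (μ : Measure ℂ) [IsFiniteMeasure μ]
    (hμT : μ (Metric.sphere (0 : ℂ) 1)ᶜ = 0)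
    (φ : ℕ → Polynomial ℂ)
    (hdeg : ∀ k, (φ k).degree = (k : ℕ))
    (hlead : ∀ k, 0 < ((φ k).leadingCoeff).re ∧ ((φ k).leadingCoeff).im = 0)
    (horth : ∀ k m, ∫ z, (φ k).eval z * conj ((φ m).eval z) ∂μ
        = if k = m then 1 else 0)
    (n : ℕ) (w : ℂ) (hw : w ∈ Metric.sphere (0 : ℂ) 1)
    (u : ℂ) (hu : u ∈ Metric.sphere (0 : ℂ) 1)
    (pj : Polynomial ℂ)
    (hfac : (1 - Polynomial.C (conj w) * Polynomial.X) * Kpoly φ n w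
      = (Polynomial.X - Polynomial.C u) * pj)
    (r : Polynomial ℂ)
    (hr : ((Polynomial.X - Polynomial.C u) * r).degree ≤ (n : WithBot ℕ)) :
    ∫ z, ((Polynomial.X - Polynomial.C u) * r).eval z * conj (pj.eval z) ∂μ = 0 := by
  have hu1 : u * conj u = 1 := unit_mul_conj hu
  have hwr : ((Polynomial.X - Polynomial.C w) * r).degree ≤ (n : WithBot ℕ) := by
    by_cases hr0 : r = 0
    · rw [hr0, mul_zero]
      simp
    · rw [Polynomial.degree_mul, Polynomial.degree_X_sub_C] at hr ⊢
      exact hr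
  have hrepro := repro μ hμT φ hdeg hlead horth n _ hwr w
  have key : ∀ z ∈ Metric.sphere (0:ℂ) 1,
      ((Polynomial.X - Polynomial.C u) * r).eval z * conj (pj.eval z)
        = (-u) * (((Polynomial.X - Polynomial.C w) * r).eval z
            * conj (christoffelK φ n w z)) := by
    intro z hz
    have hz1 : z * conj z = 1 := unit_mul_conj hz
    have hrel : (conj z - conj u) * conj (pj.eval z)
        = (1 - w * conj z) * conj (christoffelK φ n w z) := by
      have h1 := congrArg (fun q => conj (Polynomial.eval z q)) hfac
      simp only [Polynomial.eval_mul, Polynomial.eval_sub, Polynomial.eval_one,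
        Polynomial.eval_X, Polynomial.eval_C, map_mul, map_sub, map_one,
        Complex.conj_conj, Kpoly_eval] at h1
      exact h1.symm
    simp only [Polynomial.eval_mul, Polynomial.eval_sub, Polynomial.eval_X,
      Polynomial.eval_C]
    linear_combination (-(z*u)*(Polynomial.eval z r)) * hrel
      + ((conj (pj.eval z)*u + conj (christoffelK φ n w z)*u*w)
          *(Polynomial.eval z r)) * hz1
      + (-(conj (pj.eval z)*z)*(Polynomial.eval z r)) * hu1
  calc ∫ z, ((Polynomial.X - Polynomial.C u) * r).eval z * conj (pj.eval z) ∂μ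
      = ∫ z, (-u) * (((Polynomial.X - Polynomial.C w) * r).eval z
          * conj (christoffelK φ n w z)) ∂μ := by
        refine integral_congr_ae ?_
        filter_upwards [ae_sphere μ hμT] with z hz using key z hz
    _ = (-u) * ∫ z, ((Polynomial.X - Polynomial.C w) * r).eval z
          * conj (christoffelK φ n w z) ∂μ := integral_const_mul _ _
    _ = (-u) * ((Polynomial.X - Polynomial.C w) * r).eval w := by rw [hrepro]
    _ = 0 := by simp

lemma nodes_orth (μ : Measure ℂ) [IsFiniteMeasure μ]
    (hμT : μ (Metric.sphere (0 : ℂ) 1)ᶜ = 0)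
    (hμinf : ∀ s : Finset ℂ, μ ((s : Set ℂ)ᶜ) ≠ 0)
    (φ : ℕ → Polynomial ℂ)
    (hdeg : ∀ k, (φ k).degree = (k : ℕ))
    (hlead : ∀ k, 0 < ((φ k).leadingCoeff).re ∧ ((φ k).leadingCoeff).im = 0)
    (horth : ∀ k m, ∫ z, (φ k).eval z * conj ((φ m).eval z) ∂μ
        = if k = m then 1 else 0)
    (n : ℕ) (w : ℂ) (hw : w ∈ Metric.sphere (0 : ℂ) 1)
    (ζ : Fin (n + 1) → ℂ)
    (hζT : ∀ j, ζ j ∈ Metric.sphere (0 : ℂ) 1)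
    (hζinj : Function.Injective ζ)
    (hζ0 : ∀ j, paraOrtho φ n w (ζ j) = 0) :
    ∀ j k : Fin (n + 1), j ≠ k → christoffelK φ n (ζ k) (ζ j) = 0 := by
  classical
  obtain ⟨c, hc0, hcfac⟩ := bFactorization φ hdeg hlead n w ζ hζinj hζ0
  intro j k hjk
  -- p_j
  set pj : Polynomial ℂ :=
    Polynomial.C c * ∏ m ∈ Finset.univ.erase j, (Polynomial.X - Polynomial.C (ζ m)) with hpj
  have hfac : (1 - Polynomial.C (conj w) * Polynomial.X) * Kpoly φ n w
      = (Polynomial.X - Polynomial.C (ζ j)) * pj := by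
    rw [hcfac, hpj, ← Finset.mul_prod_erase _ _ (Finset.mem_univ j)]
    ring
  have hpjdeg : pj.degree ≤ (n : WithBot ℕ) := by
    rw [hpj]
    refine (Polynomial.degree_mul_le _ _).trans ?_
    have h2 : (∏ m ∈ Finset.univ.erase j,
        (Polynomial.X - Polynomial.C (ζ m))).degree = (n : WithBot ℕ) := by
      rw [Polynomial.degree_prod]
      simp only [Polynomial.degree_X_sub_C]
      rw [Finset.sum_const, Finset.card_erase_of_mem (Finset.mem_univ j)]
      simp
    rw [h2]
    calc (Polynomial.C c).degree + (n : WithBot ℕ) ≤ 0 + (n : WithBot ℕ) :=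
          add_le_add Polynomial.degree_C_le le_rfl
      _ = (n : WithBot ℕ) := by rw [zero_add]
  have hpjval : pj.eval (ζ j) ≠ 0 := by
    rw [hpj]
    simp only [Polynomial.eval_mul, Polynomial.eval_C, Polynomial.eval_prod,
      Polynomial.eval_sub, Polynomial.eval_X]
    refine mul_ne_zero hc0 ?_
    rw [Finset.prod_ne_zero_iff]
    intro m hm
    rw [sub_ne_zero]
    exact fun h => (Finset.mem_erase.mp hm).1 (hζinj h.symm)
  have hpjk : pj.eval (ζ k) = 0 := by
    rw [hpj]
    simp only [Polynomial.eval_mul, Polynomial.eval_C, Polynomial.eval_prod,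
      Polynomial.eval_sub, Polynomial.eval_X]
    refine mul_eq_zero_of_right _ ?_
    refine Finset.prod_eq_zero (Finset.mem_erase.mpr ⟨(Ne.symm hjk), Finset.mem_univ k⟩) ?_
    simp
  have hpjne : pj ≠ 0 := fun h => hpjval (by rw [h]; simp)
  -- decompose K_{ζ k} along p_j
  set α : ℂ := christoffelK φ n (ζ k) (ζ j) / pj.eval (ζ j) with hα
  set s : Polynomial ℂ := Kpoly φ n (ζ k) - Polynomial.C α * pj with hs
  have hsroot : s.eval (ζ j) = 0 := by
    rw [hs]
    simp only [Polynomial.eval_sub, Polynomial.eval_mul, Polynomial.eval_C, Kpoly_eval]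
    rw [hα, div_mul_cancel₀ _ hpjval]
    simp
  obtain ⟨r, hr⟩ := (Polynomial.dvd_iff_isRoot.mpr hsroot)
  have hsd : s.degree ≤ (n : WithBot ℕ) := by
    rw [hs]
    refine (Polynomial.degree_sub_le _ _).trans ?_
    refine max_le (Kpoly_degree φ hdeg n _) ?_
    refine (Polynomial.degree_mul_le _ _).trans ?_
    calc (Polynomial.C α).degree + pj.degree ≤ 0 + (n : WithBot ℕ) :=
          add_le_add Polynomial.degree_C_le hpjdeg
      _ = (n : WithBot ℕ) := by rw [zero_add]
  have hrd : ((Polynomial.X - Polynomial.C (ζ j)) * r).degree ≤ (n : WithBot ℕ) := by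
    rw [← hr]; exact hsd
  have hI1 := lemA μ hμT φ hdeg hlead horth n w hw (ζ j) (hζT j) pj hfac r hrd
  have hI2 : ∫ z, pj.eval z * conj (christoffelK φ n (ζ k) z) ∂μ = pj.eval (ζ k) :=
    repro μ hμT φ hdeg hlead horth n pj hpjdeg (ζ k)
  -- split the integral
  have hsplit : ∀ z : ℂ, pj.eval z * conj (christoffelK φ n (ζ k) z)
      = conj (((Polynomial.X - Polynomial.C (ζ j)) * r).eval z * conj (pj.eval z))
        + conj α * (pj.eval z * conj (pj.eval z)) := by
    intro z
    have hKz : christoffelK φ n (ζ k) z = s.eval z + α * pj.eval z := by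
      rw [hs]
      simp only [Polynomial.eval_sub, Polynomial.eval_mul, Polynomial.eval_C, Kpoly_eval]
      ring
    rw [hKz, ← hr]
    simp only [map_add, map_mul, Complex.conj_conj]
    ring
  have hIint1 : Integrable
      (fun z => conj (((Polynomial.X - Polynomial.C (ζ j)) * r).eval z * conj (pj.eval z))) μ := by
    refine (integrable_mul_conj μ hμT pj ((Polynomial.X - Polynomial.C (ζ j)) * r)).congr
      (Eventually.of_forall fun z => ?_)
    simp only [map_mul, Complex.conj_conj]
    ring
  have hIint2 : Integrable (fun z => conj α * (pj.eval z * conj (pj.eval z))) μ :=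
    (integrable_mul_conj μ hμT pj pj).const_mul _
  have hIsum : ∫ z, pj.eval z * conj (christoffelK φ n (ζ k) z) ∂μ
      = (∫ z, conj (((Polynomial.X - Polynomial.C (ζ j)) * r).eval z * conj (pj.eval z)) ∂μ)
        + ∫ z, conj α * (pj.eval z * conj (pj.eval z)) ∂μ := by
    rw [← integral_add hIint1 hIint2]
    exact integral_congr_ae (Eventually.of_forall hsplit)
  rw [hI2, hpjk] at hIsum
  rw [integral_conj, hI1, map_zero, zero_add, integral_const_mul] at hIsum
  have hN := integral_self_ne_zero μ hμT hμinf pj hpjne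
  have hα0 : conj α = 0 := by
    rcases mul_eq_zero.mp hIsum.symm with h | h
    · exact h
    · exact absurd h hN
  have : α = 0 := by
    have := congrArg conj hα0
    simpa using this
  rw [hα, _root_.div_eq_zero_iff] at this
  rcases this with h | h
  · exact h
  · exact absurd h hpjval

theorem reproducing_at_nodes_and_quadrature
    (μ : Measure ℂ) [IsFiniteMeasure μ]
    (hμT : μ (Metric.sphere (0 : ℂ) 1)ᶜ = 0)
    (hμinf : ∀ s : Finset ℂ, μ ((s : Set ℂ)ᶜ) ≠ 0)
    (φ : ℕ → Polynomial ℂ)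
    (hdeg : ∀ k, (φ k).degree = (k : ℕ))
    (hlead : ∀ k, 0 < ((φ k).leadingCoeff).re ∧ ((φ k).leadingCoeff).im = 0)
    (horth : ∀ k m, ∫ z, (φ k).eval z * conj ((φ m).eval z) ∂μ
        = if k = m then 1 else 0)
    (n : ℕ) (w : ℂ) (hw : w ∈ Metric.sphere (0 : ℂ) 1)
    (ζ : Fin (n + 1) → ℂ)
    (hζT : ∀ j, ζ j ∈ Metric.sphere (0 : ℂ) 1)
    (hζinj : Function.Injective ζ)
    (hζ0 : ∀ j, paraOrtho φ n w (ζ j) = 0) :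
    (∀ (p : Polynomial ℂ), p.degree ≤ n → ∀ j : Fin (n + 1),
      ∫ z, p.eval z * conj (christoffelK φ n (ζ j) z)
          / (Real.sqrt ((christoffelK φ n (ζ j) (ζ j)).re) : ℂ) ∂μ
        = p.eval (ζ j) / (Real.sqrt ((christoffelK φ n (ζ j) (ζ j)).re) : ℂ)) ∧
    (∀ (p q : Polynomial ℂ), p.degree ≤ n → q.degree ≤ n →
      ∫ z, p.eval z * conj (q.eval z) ∂μ
        = ∑ j : Fin (n + 1),
            p.eval (ζ j) * conj (q.eval (ζ j)) / christoffelK φ n (ζ j) (ζ j)) := by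
  classical
  have hKdiag := fun j => Kdiag φ hdeg hlead n (ζ j)
  have hKne : ∀ j : Fin (n + 1), christoffelK φ n (ζ j) (ζ j) ≠ 0 := by
    intro j h
    have := (hKdiag j).1
    rw [h] at this
    simp at this
  have hKconj : ∀ j : Fin (n + 1),
      conj (christoffelK φ n (ζ j) (ζ j)) = christoffelK φ n (ζ j) (ζ j) :=
    fun j => Complex.conj_eq_iff_im.mpr (hKdiag j).2
  have horthK := nodes_orth μ hμT hμinf φ hdeg hlead horth n w hw ζ hζT hζinj hζ0
  constructor
  · intro p hp j
    rw [integral_div, repro μ hμT φ hdeg hlead horth n p hp (ζ j)]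
  · intro p q hp hq
    set c : Fin (n + 1) → ℂ :=
      fun j => q.eval (ζ j) / christoffelK φ n (ζ j) (ζ j) with hcdef
    have hq_eq : q = ∑ j : Fin (n + 1), Polynomial.C (c j) * Kpoly φ n (ζ j) := by
      set s : Polynomial ℂ :=
        q - ∑ j : Fin (n + 1), Polynomial.C (c j) * Kpoly φ n (ζ j) with hs
      have hsdeg : s.natDegree < Fintype.card (Fin (n + 1)) := by
        have h1 : s.degree ≤ (n : WithBot ℕ) := by
          rw [hs]
          refine (Polynomial.degree_sub_le _ _).trans (max_le hq ?_)
          refine (Polynomial.degree_sum_le _ _).trans ?_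
          refine Finset.sup_le fun j _ => ?_
          refine (Polynomial.degree_mul_le _ _).trans ?_
          calc (Polynomial.C (c j)).degree + (Kpoly φ n (ζ j)).degree
              ≤ 0 + (n : WithBot ℕ) := add_le_add Polynomial.degree_C_le
                  (Kpoly_degree φ hdeg n _)
            _ = (n : WithBot ℕ) := by rw [zero_add]
        have := Polynomial.natDegree_le_iff_degree_le.mpr h1
        simpa [Fintype.card_fin] using Nat.lt_succ_of_le this
      have hseval : ∀ k : Fin (n + 1), s.eval (ζ k) = 0 := by
        intro k
        rw [hs]
        simp only [Polynomial.eval_sub, Polynomial.eval_finset_sum, Polynomial.eval_mul,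
          Polynomial.eval_C, Kpoly_eval]
        have hsum : ∑ j : Fin (n + 1), c j * christoffelK φ n (ζ j) (ζ k)
            = c k * christoffelK φ n (ζ k) (ζ k) := by
          refine Finset.sum_eq_single k (fun j _ hjk => ?_) (fun h => absurd (Finset.mem_univ k) h)
          rw [horthK k j (fun h => hjk h.symm), mul_zero]
        rw [hsum, hcdef]
        rw [div_mul_cancel₀ _ (hKne k)]
        simp
      have hzero : s = 0 :=
        Polynomial.eq_zero_of_natDegree_lt_card_of_eval_eq_zero s hζinj hseval hsdeg
      have := sub_eq_zero.mp (hs ▸ hzero)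
      exact this
    -- expand the integral
    have hptwise : ∀ z : ℂ, p.eval z * conj (q.eval z)
        = ∑ j : Fin (n + 1), conj (c j) * (p.eval z * conj (christoffelK φ n (ζ j) z)) := by
      intro z
      conv_lhs => rw [hq_eq]
      rw [Polynomial.eval_finset_sum, map_sum, Finset.mul_sum]
      refine Finset.sum_congr rfl fun j _ => ?_
      simp only [Polynomial.eval_mul, Polynomial.eval_C, map_mul, Kpoly_eval]
      ring
    calc ∫ z, p.eval z * conj (q.eval z) ∂μ
        = ∫ z, ∑ j : Fin (n + 1),
            conj (c j) * (p.eval z * conj (christoffelK φ n (ζ j) z)) ∂μ := by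
          simp_rw [hptwise]
      _ = ∑ j : Fin (n + 1),
            ∫ z, conj (c j) * (p.eval z * conj (christoffelK φ n (ζ j) z)) ∂μ :=
          integral_finset_sum _ (fun j _ =>
            ((integrable_mul_conj μ hμT p (Kpoly φ n (ζ j))).congr
              (Eventually.of_forall fun z => by simp only [Kpoly_eval])).const_mul _)
      _ = ∑ j : Fin (n + 1),
            conj (c j) * ∫ z, p.eval z * conj (christoffelK φ n (ζ j) z) ∂μ := by
          simp_rw [integral_const_mul]
      _ = ∑ j : Fin (n + 1), conj (c j) * p.eval (ζ j) := by
          refine Finset.sum_congr rfl fun j _ => ?_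
          rw [repro μ hμT φ hdeg hlead horth n p hp (ζ j)]
      _ = ∑ j : Fin (n + 1),
            p.eval (ζ j) * conj (q.eval (ζ j)) / christoffelK φ n (ζ j) (ζ j) := by
          refine Finset.sum_congr rfl fun j _ => ?_
          rw [hcdef]
          simp only [map_div₀, hKconj j]
          ring
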